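/- arXiv:2205.08925 — 2 statements merged into one kernel-verified Lean document; each statement's English description precedes it below -/
import Mathlib

section
/- In a linear structural equation model $X_j \leftarrow \Psi_j + \sum_{k \in \mathrm{PA}(j)} \theta_{j,k} X_k$ with independent centered noise variables $\Psi_1,\ldots,\Psi_p$ (finite positive variances, invertible covariance of $X$), for any measurable $f$ with $E\{f(X_j)^2\}<\infty$, the population OLS coefficient $\beta^{f,j} = E(XX^\top)^{-1}E\{Xf(X_j)\}$ satisfies $\beta^{f,j}_k = 0$ for every $k \notin \mathrm{AN}(j) \cup \{j\}$, where $\mathrm{AN}(j)$ denotes the ancestors of $j$. -/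
open MeasureTheory ProbabilityTheory

lemma mul_int {Ω : Type*} [MeasurableSpace Ω] {μ : Measure Ω}
    {f g : Ω → ℝ} (hf : MemLp f 2 μ) (hg : MemLp g 2 μ) :
    Integrable (fun a => f a * g a) μ := by
  rw [← memLp_one_iff_integrable]
  have := hg.smul hf (p := 2) (q := 2) (r := 1)
  exact this

lemma sem_repr {Ω : Type*} [MeasurableSpace Ω] {μ : Measure Ω}
    {p : ℕ} {E : Fin p → Fin p → Prop}
    (hacyc : ∀ v, ¬ Relation.TransGen E v v)
    {θ : Fin p → Fin p → ℝ} (hθ : ∀ j k, θ j k ≠ 0 → E k j)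
    {Ψ X : Fin p → Ω → ℝ}
    (hSEM : ∀ i, ∀ᵐ a ∂μ, X i a = Ψ i a + ∑ k, θ i k * X k a) :
    ∀ i, ∃ w : Fin p → ℝ,
      (∀ l, w l ≠ 0 → l = i ∨ Relation.TransGen E l i) ∧
      X i =ᵐ[μ] fun a => ∑ l, w l * Ψ l a := by
  classical
  have : IsTrans (Fin p) (Relation.TransGen E) := ⟨fun a b c => Relation.TransGen.trans⟩
  have : IsIrrefl (Fin p) (Relation.TransGen E) := ⟨hacyc⟩
  have hwf : WellFounded (Relation.TransGen E) := Finite.wellFounded_of_trans_of_irrefl _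
  intro i
  induction i using hwf.induction with
  | _ i IH =>
  have H : ∀ kk : Fin p, ∃ w : Fin p → ℝ,
      θ i kk ≠ 0 → ((∀ l, w l ≠ 0 → l = kk ∨ Relation.TransGen E l kk) ∧
        X kk =ᵐ[μ] fun a => ∑ l, w l * Ψ l a) := by
    intro kk
    by_cases h : θ i kk = 0
    · exact ⟨0, fun h' => absurd h h'⟩
    · obtain ⟨w, hw⟩ := IH kk (Relation.TransGen.single (hθ i kk h))
      exact ⟨w, fun _ => hw⟩
  choose W hW using H
  refine ⟨fun l => (if l = i then 1 else 0) + ∑ kk, θ i kk * W kk l, ?_, ?_⟩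
  · intro l hl
    by_cases hli : l = i
    · exact Or.inl hli
    right
    have hs : ∑ kk, θ i kk * W kk l ≠ 0 := by simpa [hli] using hl
    obtain ⟨kk, -, hkk⟩ := Finset.exists_ne_zero_of_sum_ne_zero hs
    have hθk : θ i kk ≠ 0 := fun h => by simp [h] at hkk
    have hWk : W kk l ≠ 0 := fun h => by simp [h] at hkk
    rcases (hW kk hθk).1 l hWk with h | h
    · exact h ▸ Relation.TransGen.single (hθ i kk hθk)
    · exact h.trans (Relation.TransGen.single (hθ i kk hθk))
  · have hall : ∀ᵐ a ∂μ, ∀ kk, θ i kk ≠ 0 → X kk a = ∑ l, W kk l * Ψ l a := by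
      rw [ae_all_iff]
      intro kk
      by_cases h : θ i kk = 0
      · exact Filter.Eventually.of_forall (fun a hk => absurd h hk)
      · filter_upwards [(hW kk h).2] with a ha
        exact fun _ => ha
    filter_upwards [hSEM i, hall] with a ha hall
    rw [ha]
    have h1 : ∑ kk, θ i kk * X kk a = ∑ kk, θ i kk * ∑ l, W kk l * Ψ l a := by
      refine Finset.sum_congr rfl fun kk _ => ?_
      by_cases h : θ i kk = 0
      · simp [h]
      · rw [hall kk h]
    rw [h1]
    simp only [add_mul, Finset.sum_add_distrib, ite_mul, one_mul, zero_mul,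
      Finset.sum_ite_eq', Finset.mem_univ, if_true, Finset.sum_mul, Finset.mul_sum]
    rw [Finset.sum_comm]
    simp [mul_assoc]
open MeasureTheory ProbabilityTheory

/-- Theorem 1: In a linear SEM over a DAG with independent centered
noises, the population OLS coefficient of `f(X j)` on `X` vanishes at every
coordinate `k` that is neither `j` nor an ancestor of `j`. -/
theorem ancestor_regression_nonancestor_zero
    {Ω : Type*} [MeasurableSpace Ω] (μ : Measure Ω) [IsProbabilityMeasure μ]
    (p : ℕ) (E : Fin p → Fin p → Prop)
    (hacyc : ∀ v, ¬ Relation.TransGen E v v)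
    (θ : Fin p → Fin p → ℝ)
    (hθ : ∀ j k, θ j k ≠ 0 → E k j)
    (Ψ X : Fin p → Ω → ℝ)
    (hΨmeas : ∀ l, Measurable (Ψ l)) (hXmeas : ∀ l, Measurable (X l))
    (hindep : iIndepFun Ψ μ)
    (hcent : ∀ l, ∫ a, Ψ l a ∂μ = 0)
    (hL2 : ∀ l, MemLp (Ψ l) 2 μ)
    (hvarpos : ∀ l, 0 < ∫ a, (Ψ l a) ^ 2 ∂μ)
    (hSEM : ∀ i, ∀ᵐ a ∂μ, X i a = Ψ i a + ∑ k, θ i k * X k a)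
    (Sx : Matrix (Fin p) (Fin p) ℝ)
    (hS : Sx = Matrix.of fun i l => ∫ a, X i a * X l a ∂μ)
    (hSinv : IsUnit Sx.det)
    (j : Fin p) (f : ℝ → ℝ) (hf : Measurable f)
    (hfL2 : MemLp (fun a => f (X j a)) 2 μ)
    (k : Fin p) (hkj : k ≠ j) (hkanc : ¬ Relation.TransGen E k j) :
    Sx⁻¹.mulVec (fun i => ∫ a, X i a * f (X j a) ∂μ) k = 0 := by
  classical
  obtain ⟨w, hw⟩ := Classical.axiomOfChoice (sem_repr hacyc hθ hSEM)
  have hw1 : ∀ i l, w i l ≠ 0 → l = i ∨ Relation.TransGen E l i := fun i => (hw i).1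
  have hw2 : ∀ i, X i =ᵐ[μ] fun a => ∑ l, w i l * Ψ l a := fun i => (hw i).2
  -- ancestral set
  set S : Finset (Fin p) := Finset.univ.filter (fun l => l = j ∨ Relation.TransGen E l j) with hSdef
  have hkS : k ∉ S := by simp [hSdef, hkj, hkanc]
  -- basic L2/integrability facts
  have hXL2 : ∀ i, MemLp (X i) 2 μ := by
    intro i
    have h : MemLp (fun a => ∑ l, w i l * Ψ l a) 2 μ := by
      have h0 := memLp_finset_sum' (μ := μ) (p := 2) Finset.univ
        (f := fun l => fun a => w i l * Ψ l a) (fun l _ => (hL2 l).const_mul (w i l))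
      convert h0 using 1
      funext a
      simp
    exact MemLp.ae_eq (hw2 i).symm h
  set c : Fin p → ℝ := fun l => ∫ a, Ψ l a * f (X j a) ∂μ with hcdef
  set D : Fin p → ℝ := fun l => ∫ a, (Ψ l a) ^ 2 ∂μ with hDdef
  have hD0 : ∀ l, D l ≠ 0 := fun l => (hvarpos l).ne'
  -- X j is a.e. a function of the noises in S
  have hXjS : (fun a => f (X j a)) =ᵐ[μ] fun a => f (∑ l ∈ S, w j l * Ψ l a) := by
    filter_upwards [hw2 j] with a ha
    rw [ha]
    congr 1
    exact (Finset.sum_subset S.subset_univ (fun x _ hx => by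
      have : w j x = 0 := by
        by_contra h
        exact hx (by simpa [hSdef] using hw1 j x h)
      simp [this])).symm
  -- noises outside S are uncorrelated with f(X j)
  have hc0 : ∀ l, l ∉ S → c l = 0 := by
    intro l hl
    have hdis : Disjoint ({l} : Finset (Fin p)) S := by simp [hl]
    have hind := hindep.indepFun_finset {l} S hdis hΨmeas
    set φ₁ : (({l} : Finset (Fin p)) → ℝ) → ℝ := fun v => v ⟨l, Finset.mem_singleton_self l⟩
    set φ₂ : (S → ℝ) → ℝ :=
      fun v => f (∑ r ∈ S.attach, w j r.1 * v r)
    have hφ₁ : Measurable φ₁ := measurable_pi_apply _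
    have hφ₂ : Measurable φ₂ := by
      apply hf.comp
      exact Finset.measurable_sum _ (fun r _ => (measurable_pi_apply r).const_mul _)
    have hind2 : IndepFun (Ψ l) (fun a => f (∑ r ∈ S, w j r * Ψ r a)) μ := by
      have h2 := hind.comp hφ₁ hφ₂
      have e1 : (φ₁ ∘ fun a (i : ({l} : Finset (Fin p))) => Ψ i a) = Ψ l := rfl
      have e2 : (φ₂ ∘ fun a (i : S) => Ψ i a)
          = fun a => f (∑ r ∈ S, w j r * Ψ r a) := by
        funext a
        simp only [Function.comp_apply, φ₂]
        congr 1
        exact Finset.sum_attach S fun r => w j r * Ψ r a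
      rwa [e1, e2] at h2
    have hgint : Integrable (fun a => f (∑ r ∈ S, w j r * Ψ r a)) μ :=
      ((hfL2.integrable (by norm_num)).congr hXjS)
    have := hind2.integral_mul_eq_mul_integral ((hL2 l).integrable (by norm_num)).1 hgint.1
    have hrw : c l = ∫ a, Ψ l a * f (∑ r ∈ S, w j r * Ψ r a) ∂μ := by
      rw [hcdef]
      exact integral_congr_ae (by filter_upwards [hXjS] with a ha; rw [ha])
    rw [hrw]
    calc ∫ a, Ψ l a * f (∑ r ∈ S, w j r * Ψ r a) ∂μ
        = ∫ a, (Ψ l * fun a => f (∑ r ∈ S, w j r * Ψ r a)) a ∂μ := by rfl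
      _ = (∫ a, Ψ l a ∂μ) * ∫ a, f (∑ r ∈ S, w j r * Ψ r a) ∂μ := this
      _ = 0 := by rw [hcent l, zero_mul]
  -- orthogonality of distinct noises
  have horth : ∀ l r : Fin p, l ≠ r → ∫ a, Ψ l a * Ψ r a ∂μ = 0 := by
    intro l r hlr
    have := (hindep.indepFun hlr).integral_mul_eq_mul_integral
      ((hL2 l).integrable (by norm_num)).1 ((hL2 r).integrable (by norm_num)).1
    calc ∫ a, Ψ l a * Ψ r a ∂μ = ∫ a, (Ψ l * Ψ r) a ∂μ := rfl
      _ = (∫ a, Ψ l a ∂μ) * ∫ a, Ψ r a ∂μ := this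
      _ = 0 := by rw [hcent l, zero_mul]
  -- E[X i Ψ r] = w i r * D r
  have hEXΨ : ∀ i r, ∫ a, X i a * Ψ r a ∂μ = w i r * D r := by
    intro i r
    have h1 : ∫ a, X i a * Ψ r a ∂μ = ∫ a, (∑ l, w i l * Ψ l a) * Ψ r a ∂μ :=
      integral_congr_ae (by filter_upwards [hw2 i] with a ha; rw [ha])
    rw [h1]
    have h2 : ∀ a, (∑ l, w i l * Ψ l a) * Ψ r a = ∑ l, w i l * (Ψ l a * Ψ r a) := by
      intro a; rw [Finset.sum_mul]; exact Finset.sum_congr rfl fun l _ => by ring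
    simp only [h2]
    rw [integral_finset_sum _ (fun l _ =>
      (mul_int (hL2 l) (hL2 r)).const_mul (w i l))]
    rw [Finset.sum_eq_single r]
    · simp only [integral_const_mul]
      congr 1
      rw [hDdef]; exact integral_congr_ae (Filter.Eventually.of_forall fun a => by ring)
    · intro l _ hlr
      rw [integral_const_mul, horth l r hlr, mul_zero]
    · simp
  -- E[X i f(X j)] = ∑ r, w i r * c r
  have hEXf : ∀ i, ∫ a, X i a * f (X j a) ∂μ = ∑ r, w i r * c r := by
    intro i
    have h1 : ∫ a, X i a * f (X j a) ∂μ = ∫ a, ∑ r, w i r * (Ψ r a * f (X j a)) ∂μ :=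
      integral_congr_ae (by
        filter_upwards [hw2 i] with a ha
        rw [ha, Finset.sum_mul]
        exact Finset.sum_congr rfl fun l _ => by ring)
    rw [h1, integral_finset_sum _ (fun r _ =>
      (mul_int (hL2 r) hfL2).const_mul (w i r))]
    exact Finset.sum_congr rfl fun r _ => by rw [integral_const_mul]
  -- key matrix identity: ∑ l, θ r l * Sx i l = Sx i r - w i r * D r
  have hθS : ∀ i r, ∑ l, θ r l * Sx i l = Sx i r - w i r * D r := by
    intro i r
    have h1 : ∑ l, θ r l * Sx i l = ∫ a, X i a * ∑ l, θ r l * X l a ∂μ := by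
      rw [hS]
      simp only [Matrix.of_apply]
      simp only [← integral_const_mul]
      rw [← integral_finset_sum _ (fun l _ =>
        (mul_int (hXL2 i) (hXL2 l)).const_mul (θ r l))]
      have hpt : ∀ a, ∑ l, θ r l * (X i a * X l a) = X i a * ∑ l, θ r l * X l a := by
        intro a
        rw [Finset.mul_sum]
        exact Finset.sum_congr rfl fun l _ => by ring
      exact integral_congr_ae (Filter.Eventually.of_forall fun a => hpt a)
    rw [h1]
    have h2 : ∫ a, X i a * ∑ l, θ r l * X l a ∂μ = ∫ a, X i a * (X r a - Ψ r a) ∂μ :=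
      integral_congr_ae (by
        filter_upwards [hSEM r] with a ha
        have : ∑ l, θ r l * X l a = X r a - Ψ r a := by rw [ha]; ring
        rw [this])
    rw [h2]
    have h3 : ∫ a, X i a * (X r a - Ψ r a) ∂μ
        = (∫ a, X i a * X r a ∂μ) - ∫ a, X i a * Ψ r a ∂μ := by
      rw [← integral_sub (mul_int (hXL2 i) (hXL2 r)) (mul_int (hXL2 i) (hL2 r))]
      exact integral_congr_ae (Filter.Eventually.of_forall fun a => by ring)
    rw [h3, hEXΨ, hS]
    rfl
  -- the candidate regression vector
  set β : Fin p → ℝ := fun l => c l / D l - ∑ r, θ r l * (c r / D r) with hβdef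
  have hmain : Sx.mulVec β = fun i => ∫ a, X i a * f (X j a) ∂μ := by
    funext i
    rw [Matrix.mulVec, dotProduct]
    have expand : ∀ l, Sx i l * β l
        = Sx i l * (c l / D l) - ∑ r, θ r l * Sx i l * (c r / D r) := by
      intro l
      rw [hβdef]
      rw [mul_sub, Finset.mul_sum]
      congr 1
      exact Finset.sum_congr rfl fun r _ => by ring
    simp only [expand]
    rw [Finset.sum_sub_distrib, Finset.sum_comm]
    have swap : ∀ r, ∑ l, θ r l * Sx i l * (c r / D r)
        = (Sx i r - w i r * D r) * (c r / D r) := by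
      intro r
      rw [← Finset.sum_mul, hθS]
    simp only [swap]
    rw [hEXf i]
    have : ∀ r, Sx i r * (c r / D r) - (Sx i r - w i r * D r) * (c r / D r)
        = w i r * c r := by
      intro r
      have e : Sx i r * (c r / D r) - (Sx i r - w i r * D r) * (c r / D r)
          = w i r * (c r / D r * D r) := by ring
      rw [e, div_mul_cancel₀ (c r) (hD0 r)]
    rw [← Finset.sum_sub_distrib]
    exact Finset.sum_congr rfl fun r _ => this r
  -- conclude
  have hβk : β k = 0 := by
    have hck : c k = 0 := hc0 k hkS
    have hterm : ∀ r, θ r k * (c r / D r) = 0 := by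
      intro r
      by_cases hθr : θ r k = 0
      · rw [hθr, zero_mul]
      · have hcr : c r = 0 := by
          apply hc0
          intro hrS
          apply hkanc
          rcases Finset.mem_filter.mp hrS with ⟨-, hrj | hrj⟩
          · exact hrj ▸ Relation.TransGen.single (hθ r k hθr)
          · exact (Relation.TransGen.single (hθ r k hθr)).trans hrj
        rw [hcr]; simp
    have hβk' : β k = c k / D k - ∑ r, θ r k * (c r / D r) := rfl
    rw [hβk', hck, Finset.sum_congr rfl (fun r _ => hterm r)]
    simp
  rw [← hmain, Matrix.mulVec_mulVec, Matrix.nonsing_inv_mul Sx hSinv, Matrix.one_mulVec]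
  exact hβk
end

section
/- In a linear SEM over a DAG, let $k \in \mathrm{AN}(j)$ with $\mathrm{CH}^{\to j}(k) = \{l\}$ and suppose $\Psi_l \stackrel{d}{=} \theta_{l,k}\Psi_k$. Then the population OLS coefficient $\beta^{f,j}_k = 0$ for any measurable $f$ with the relevant moments finite. -/
open MeasureTheory ProbabilityTheory Finset

section Alg
variable {p : ℕ} (E : Fin p → Fin p → Prop) (θm : Matrix (Fin p) (Fin p) ℝ)
  (hθ : ∀ i m, θm i m ≠ 0 → E m i)

/-- A chain of edges gives TransGen. -/
lemma chain_transGen (c : ℕ → Fin p) (n : ℕ) (hc : ∀ t < n, E (c t) (c (t+1)))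
    {a b : ℕ} (hab : a < b) (hbn : b ≤ n) : Relation.TransGen E (c a) (c b) := by
  induction b with
  | zero => omega
  | succ b ih =>
    rcases Nat.lt_or_ge a b with h | h
    · exact (ih h (by omega)).tail (hc b (by omega))
    · have : a = b := by omega
      subst this
      exact Relation.TransGen.single (hc a (by omega))

include hθ in
lemma pow_support : ∀ (n : ℕ) (i m : Fin p), (θm ^ n) i m ≠ 0 →
    ∃ c : ℕ → Fin p, c 0 = m ∧ c n = i ∧ ∀ t < n, E (c t) (c (t+1)) := by
  intro n
  induction n with
  | zero =>
    intro i m h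
    rw [pow_zero, Matrix.one_apply] at h
    have him : i = m := by
      by_contra hne; simp [Matrix.one_apply, hne] at h
    exact ⟨fun _ => m, rfl, him.symm, by omega⟩
  | succ n ih =>
    intro i m h
    rw [pow_succ', Matrix.mul_apply] at h
    obtain ⟨r, hr⟩ := Finset.exists_ne_zero_of_sum_ne_zero h
    have h1 : θm i r ≠ 0 := fun h0 => hr.2 (by simp [h0])
    have h2 : (θm ^ n) r m ≠ 0 := fun h0 => hr.2 (by simp [h0])
    obtain ⟨c, hc0, hcn, hce⟩ := ih r m h2
    refine ⟨fun t => if t < n + 1 then c t else i, by simp [hc0], by simp, ?_⟩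
    intro t ht
    rcases Nat.lt_or_ge t n with h' | h'
    · simp only [if_pos (by omega : t < n+1), if_pos (by omega : t + 1 < n+1)]
      exact hce t h'
    · have ht' : t = n := by omega
      subst ht'
      simp only [if_pos (Nat.lt_succ_self t), if_neg (lt_irrefl (t+1))]
      rw [hcn]
      exact hθ i r h1

include hθ in
lemma theta_nilpotent (hacyc : ∀ v, ¬ Relation.TransGen E v v) : θm ^ p = 0 := by
  ext i m
  by_contra h
  obtain ⟨c, hc0, hcn, hce⟩ := pow_support E θm hθ p i m h
  have hlt : Fintype.card (Fin p) < Fintype.card (Fin (p+1)) := by simp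
  obtain ⟨a, b, hab, heq⟩ := Fintype.exists_ne_map_eq_of_card_lt
    (fun t : Fin (p+1) => c t) hlt
  rcases Nat.lt_or_ge (a : ℕ) (b : ℕ) with h' | h'
  · exact hacyc _ (heq ▸ chain_transGen E c p hce h' (by omega))
  · have h'' : (b:ℕ) < (a:ℕ) := by
      rcases Nat.lt_or_ge (b:ℕ) (a:ℕ) with h2 | h2
      · exact h2
      · exact absurd (Fin.ext (by omega)) hab
    exact hacyc _ (heq ▸ chain_transGen E c p hce h'' (by omega))

include hθ in
lemma pow_support' (n : ℕ) (i m : Fin p) (h : (θm ^ n) i m ≠ 0) :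
    (n = 0 ∧ i = m) ∨ Relation.TransGen E m i := by
  obtain ⟨c, hc0, hcn, hce⟩ := pow_support E θm hθ n i m h
  rcases Nat.eq_zero_or_pos n with h0 | h0
  · subst h0; exact Or.inl ⟨rfl, by rw [← hcn, ← hc0]⟩
  · exact Or.inr (hc0 ▸ hcn ▸ chain_transGen E c n hce h0 le_rfl)

end Alg

section Geom
variable {p : ℕ} (E : Fin p → Fin p → Prop) (θm : Matrix (Fin p) (Fin p) ℝ)
  (hθ : ∀ i m, θm i m ≠ 0 → E m i)
  (hacyc : ∀ v, ¬ Relation.TransGen E v v)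

noncomputable def Mgeom : Matrix (Fin p) (Fin p) ℝ := ∑ n ∈ Finset.range (p+1), θm ^ n

include hθ hacyc

lemma Mgeom_mul : (Mgeom θm) * (1 - θm) = 1 := by
  have h0 : θm ^ (p+1) = 0 := by
    rw [pow_succ, theta_nilpotent E θm hθ hacyc, zero_mul]
  have hg := geom_sum_mul θm (p+1)
  rw [h0, zero_sub] at hg
  have h2 : Mgeom θm * (1 - θm) = -(Mgeom θm * (θm - 1)) := by
    rw [← mul_neg, neg_sub]
  rw [h2, Mgeom, hg, neg_neg]

lemma mul_Mgeom : (1 - θm) * (Mgeom θm) = 1 :=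
  mul_eq_one_comm.mp (Mgeom_mul E θm hθ hacyc)

omit hacyc in
lemma Mgeom_support (i m : Fin p) (h : Mgeom θm i m ≠ 0) :
    i = m ∨ Relation.TransGen E m i := by
  rw [Mgeom, Matrix.sum_apply] at h
  obtain ⟨n, _, hn⟩ := Finset.exists_ne_zero_of_sum_ne_zero h
  rcases pow_support' E θm hθ n i m hn with ⟨_, h2⟩ | h2
  · exact Or.inl h2
  · exact Or.inr h2

lemma Mgeom_diag (i : Fin p) : Mgeom θm i i = 1 := by
  rw [Mgeom, Matrix.sum_apply]
  rw [Finset.sum_eq_single 0]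
  · simp [Matrix.one_apply]
  · intro n _ hn
    by_contra h
    rcases pow_support' E θm hθ n i i h with ⟨h1, _⟩ | h2
    · exact hn h1
    · exact hacyc i h2
  · simp

end Geom

section PathL
variable {p : ℕ} (E : Fin p → Fin p → Prop) (θm : Matrix (Fin p) (Fin p) ℝ)
  (hθ : ∀ i m, θm i m ≠ 0 → E m i)
  (hacyc : ∀ v, ¬ Relation.TransGen E v v)
  (j k l : Fin p)
  (hchonly : ∀ m, E k m → (Relation.TransGen E m j ∨ m = j) → m = l)

include hθ hacyc hchonly

lemma Mgeom_through_l (m : Fin p) (hmA : Relation.TransGen E m j ∨ m = j)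
    (hmk : m ≠ k) : Mgeom θm m k = θm l k * Mgeom θm m l := by
  have step : ∀ n : ℕ, (θm ^ (n+1)) m k = (θm ^ n) m l * θm l k := by
    intro n
    rw [pow_succ, Matrix.mul_apply]
    apply Finset.sum_eq_single l
    · intro r _ hrl
      by_cases h1 : θm r k = 0
      · rw [h1, mul_zero]
      by_cases h2 : (θm ^ n) m r = 0
      · rw [h2, zero_mul]
      exfalso
      apply hrl
      apply hchonly r (hθ r k h1)
      rcases pow_support' E θm hθ n m r h2 with ⟨_, hmr⟩ | hrm
      · rw [← hmr]; exact hmA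
      · rcases hmA with hmj | hmj
        · exact Or.inl (hrm.trans hmj)
        · exact Or.inl (hmj ▸ hrm)
    · intro h; exact absurd (Finset.mem_univ l) h
  have h0 : (θm ^ 0) m k = 0 := by
    simp [Matrix.one_apply, hmk]
  simp only [Mgeom, Matrix.sum_apply]
  rw [Finset.sum_range_succ' (fun n => (θm ^ n) m k) p, h0, add_zero]
  rw [Finset.sum_range_succ (fun n => (θm ^ n) m l) p,
    theta_nilpotent E θm hθ hacyc]
  simp only [Matrix.zero_apply, add_zero, step]
  rw [Finset.mul_sum]
  congr 1; ext n; ring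

end PathL

section Prob
variable {Ω : Type*} [MeasurableSpace Ω] {μ : Measure Ω}

lemma L2_mul_integrable {f g : Ω → ℝ} (hf : MemLp f 2 μ) (hg : MemLp g 2 μ) :
    Integrable (fun a => f a * g a) μ := by
  have : MemLp (f • g) 1 μ := MemLp.smul (r := 1) hg hf
  exact memLp_one_iff_integrable.mp this

end Prob


/-- Proposition 2: In a linear SEM over a DAG, if `k` is an
ancestor of `j`, the only child of `k` on directed paths to `j` is `l`, and
`Ψ l` has the same distribution as `θ l k • Ψ k`, then `β^{f,j}_k = 0`. -/
theorem equal_distribution_beta_zero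
    {Ω : Type*} [MeasurableSpace Ω] (μ : Measure Ω) [IsProbabilityMeasure μ]
    (p : ℕ) (E : Fin p → Fin p → Prop)
    (hacyc : ∀ v, ¬ Relation.TransGen E v v)
    (θ : Fin p → Fin p → ℝ)
    (hθ : ∀ i m, θ i m ≠ 0 → E m i)
    (Ψ X : Fin p → Ω → ℝ)
    (hΨmeas : ∀ m, Measurable (Ψ m)) (hXmeas : ∀ m, Measurable (X m))
    (hindep : iIndepFun Ψ μ)
    (hcent : ∀ m, ∫ a, Ψ m a ∂μ = 0)
    (hL2 : ∀ m, MemLp (Ψ m) 2 μ)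
    (hvarpos : ∀ m, 0 < ∫ a, (Ψ m a) ^ 2 ∂μ)
    (hSEM : ∀ i, ∀ᵐ a ∂μ, X i a = Ψ i a + ∑ m, θ i m * X m a)
    (Sx : Matrix (Fin p) (Fin p) ℝ)
    (hS : Sx = Matrix.of fun i m => ∫ a, X i a * X m a ∂μ)
    (hSinv : IsUnit Sx.det)
    (j k l : Fin p) (hkanc : Relation.TransGen E k j)
    -- `CH^{→j}(k) = {l}`
    (hchl : E k l ∧ (Relation.TransGen E l j ∨ l = j))
    (hchonly : ∀ m, E k m → (Relation.TransGen E m j ∨ m = j) → m = l)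
    (hdist : Measure.map (fun a => θ l k * Ψ k a) μ = Measure.map (Ψ l) μ)
    (f : ℝ → ℝ) (hf : Measurable f)
    (hfL2 : MemLp (fun a => f (X j a)) 2 μ)
    (hprod : ∀ i, Integrable (fun a => X i a * f (X j a)) μ) :
    Sx⁻¹.mulVec (fun i => ∫ a, X i a * f (X j a) ∂μ) k = 0 := by
  classical
  set θm : Matrix (Fin p) (Fin p) ℝ := Matrix.of θ with hθm
  have hθ' : ∀ i m, θm i m ≠ 0 → E m i := hθ
  set M : Matrix (Fin p) (Fin p) ℝ := Mgeom θm with hM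
  set σ2 : Fin p → ℝ := fun m => ∫ a, (Ψ m a) ^ 2 ∂μ with hσ2
  -- basic distinctness
  have h_kl : k ≠ l := by
    intro h
    exact hacyc k (Relation.TransGen.single (h ▸ hchl.1))
  have h_jk : j ≠ k := by
    intro h
    exact hacyc k (h ▸ hkanc)
  -- X as a linear function of the noises
  have hXrep : ∀ᵐ a ∂μ, ∀ i, X i a = ∑ r, M i r * Ψ r a := by
    have hae : ∀ᵐ a ∂μ, ∀ i, X i a = Ψ i a + ∑ m, θ i m * X m a :=
      (ae_all_iff).mpr hSEM
    filter_upwards [hae] with a ha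
    intro i
    set x : Fin p → ℝ := fun i => X i a with hx
    set ψv : Fin p → ℝ := fun i => Ψ i a with hψv
    have h1 : (1 - θm).mulVec x = ψv := by
      funext i'
      have hline := ha i'
      simp only [Matrix.mulVec, dotProduct, Matrix.sub_apply, Matrix.one_apply,
        sub_mul, ite_mul, one_mul, zero_mul]
      rw [Finset.sum_sub_distrib, Finset.sum_ite_eq (Finset.univ : Finset (Fin p)) i' x]
      simp only [Finset.mem_univ, if_true, hx, hψv]
      rw [hline]
      simp only [θm, Matrix.of_apply]
      ring
    have h2 : x = M.mulVec ψv := by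
      rw [← h1, Matrix.mulVec_mulVec, hM, Mgeom_mul E θm hθ' hacyc, Matrix.one_mulVec]
    have := congrFun h2 i
    simpa [Matrix.mulVec, dotProduct] using this
  -- σ2 l = θ l k ^ 2 * σ2 k
  have hσl : σ2 l = θ l k ^ 2 * σ2 k := by
    have hmeas2 : AEStronglyMeasurable (fun x : ℝ => x ^ 2) (Measure.map (Ψ l) μ) :=
      (measurable_id.pow_const 2).aestronglyMeasurable
    have e1 : ∫ a, (Ψ l a) ^ 2 ∂μ = ∫ x, x ^ 2 ∂(Measure.map (Ψ l) μ) :=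
      (integral_map (hΨmeas l).aemeasurable hmeas2).symm
    have e2 : ∫ x, x ^ 2 ∂(Measure.map (fun a => θ l k * Ψ k a) μ)
        = ∫ a, (θ l k * Ψ k a) ^ 2 ∂μ :=
      integral_map ((hΨmeas k).const_mul _).aemeasurable
        (measurable_id.pow_const 2).aestronglyMeasurable
    have : σ2 l = ∫ a, (θ l k * Ψ k a) ^ 2 ∂μ := by
      rw [hσ2]
      simp only []
      rw [e1, ← hdist, e2]
    rw [this]
    simp only [mul_pow, hσ2]
    rw [integral_const_mul]
  have hθlk : θ l k ≠ 0 := by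
    intro h0
    have h1 : (0:ℝ) < σ2 l := hvarpos l
    rw [hσl, h0] at h1
    simp at h1
  -- X i is L2
  have hXL2 : ∀ i, MemLp (X i) 2 μ := by
    intro i
    have h1 : MemLp (fun a => ∑ r, M i r * Ψ r a) 2 μ := by
      have := memLp_finset_sum (Finset.univ : Finset (Fin p))
        (f := fun r a => M i r * Ψ r a) (fun r _ => (hL2 r).const_mul (M i r))
      simpa using this
    apply h1.ae_eq
    filter_upwards [hXrep] with a ha
    exact (ha i).symm
  -- orthogonality of distinct noises
  have horth : ∀ r s : Fin p, r ≠ s → ∫ a, Ψ r a * Ψ s a ∂μ = 0 := by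
    intro r s hrs
    have hind : IndepFun (Ψ r) (Ψ s) μ := hindep.indepFun hrs
    rw [hind.integral_fun_mul_eq_mul_integral (hΨmeas r).aestronglyMeasurable (hΨmeas s).aestronglyMeasurable,
      hcent r, zero_mul]
  -- covariance expansion
  have key : ∀ u v : Fin p → ℝ, (∫ a, (∑ r, u r * Ψ r a) * (∑ s, v s * Ψ s a) ∂μ)
      = ∑ r, u r * v r * σ2 r := by
    intro u v
    have hint : ∀ r s : Fin p, Integrable (fun a => (u r * Ψ r a) * (v s * Ψ s a)) μ :=
      fun r s => L2_mul_integrable ((hL2 r).const_mul (u r)) ((hL2 s).const_mul (v s))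
    calc (∫ a, (∑ r, u r * Ψ r a) * (∑ s, v s * Ψ s a) ∂μ)
        = ∫ a, ∑ r, ∑ s, (u r * Ψ r a) * (v s * Ψ s a) ∂μ := by
          apply integral_congr_ae
          filter_upwards with a
          rw [Finset.sum_mul_sum]
      _ = ∑ r, ∑ s, ∫ a, (u r * Ψ r a) * (v s * Ψ s a) ∂μ := by
          rw [integral_finset_sum _
            (fun r _ => integrable_finset_sum _ (fun s _ => hint r s))]
          refine Finset.sum_congr rfl fun r _ => ?_
          rw [integral_finset_sum _ (fun s _ => hint r s)]
      _ = ∑ r, u r * v r * σ2 r := by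
          refine Finset.sum_congr rfl fun r _ => ?_
          rw [Finset.sum_eq_single r]
          · have e : (fun a => (u r * Ψ r a) * (v r * Ψ r a))
                = fun a => (u r * v r) * (Ψ r a ^ 2) := by funext a; ring
            rw [e, integral_const_mul]
          · intro s _ hs
            have e : (fun a => (u r * Ψ r a) * (v s * Ψ s a))
                = fun a => (u r * v s) * (Ψ r a * Ψ s a) := by funext a; ring
            rw [e, integral_const_mul, horth r s (Ne.symm hs), mul_zero]
          · intro hr; exact absurd (Finset.mem_univ r) hr
  have hcov : ∀ i m, ∫ a, X i a * X m a ∂μ = ∑ r, M i r * M m r * σ2 r := by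
    intro i m
    rw [← key (M i) (M m)]
    apply integral_congr_ae
    filter_upwards [hXrep] with a ha
    rw [ha i, ha m]
  -- row k of Sx⁻¹
  set c : Fin p → ℝ := fun r => ∑ i, Sx⁻¹ k i * M i r with hc
  have heq1 : ∀ m, ∑ r, c r * σ2 r * M m r = if k = m then 1 else 0 := by
    intro m
    have hinv : Sx⁻¹ * Sx = 1 := Matrix.nonsing_inv_mul Sx hSinv
    have h1 : ∑ i, Sx⁻¹ k i * Sx i m = if k = m then 1 else 0 := by
      rw [← Matrix.mul_apply, hinv, Matrix.one_apply]
    have h2 : ∑ r, c r * σ2 r * M m r = ∑ i, Sx⁻¹ k i * (∑ r, M i r * M m r * σ2 r) := by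
      simp only [hc, Finset.sum_mul, Finset.mul_sum]
      rw [Finset.sum_comm]
      exact Finset.sum_congr rfl fun i _ => Finset.sum_congr rfl fun r _ => by ring
    rw [h2, ← h1]
    refine Finset.sum_congr rfl fun i _ => ?_
    rw [← hcov i m, hS]
    rfl
  -- the ancestor set
  set A : Finset (Fin p) :=
    Finset.univ.filter (fun m => Relation.TransGen E m j ∨ m = j) with hA
  have hjA : j ∈ A := by simp [hA]
  have hMA0 : ∀ m, (Relation.TransGen E m j ∨ m = j) → ∀ r, r ∉ A → M m r = 0 := by
    intro m hm r hr
    by_contra h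
    rcases Mgeom_support E θm hθ' m r h with h1 | h1
    · exact hr (h1 ▸ (by simp [hA, hm] : m ∈ A))
    · refine hr ?_
      simp only [hA, Finset.mem_filter, Finset.mem_univ, true_and]
      rcases hm with hm | hm
      · exact Or.inl (h1.trans hm)
      · exact Or.inl (hm ▸ h1)
  set w : Fin p → ℝ := fun r => if r = k then -θ l k else if r = l then 1 else 0 with hw
  set γ : ℝ := -(θ l k * σ2 k)⁻¹ with hγ
  have hσkpos : σ2 k ≠ 0 := ne_of_gt (hvarpos k : (0:ℝ) < σ2 k)
  have heq2 : ∀ m ∈ A, ∑ r, w r * σ2 r * M m r =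
      if k = m then -(θ l k * σ2 k) else 0 := by
    intro m hm
    have hmA : Relation.TransGen E m j ∨ m = j := by
      simpa [hA] using hm
    have hterm : ∀ r, w r * σ2 r * M m r =
        (if r = k then -θ l k * σ2 k * M m k else 0) +
        (if r = l then σ2 l * M m l else 0) := by
      intro r
      rcases eq_or_ne r k with heq | hrk
      · simp [hw, heq, h_kl]
      · rcases eq_or_ne r l with heq | hrl
        · simp [hw, heq, hrk, Ne.symm h_kl]
        · simp [hw, hrk, hrl]
    rw [Finset.sum_congr rfl (fun r _ => hterm r), Finset.sum_add_distrib]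
    simp only [Finset.sum_ite_eq', Finset.mem_univ, if_true]
    rcases eq_or_ne k m with heq | hmk
    · rw [if_pos heq, ← heq]
      have hMkk : M k k = 1 := Mgeom_diag E θm hθ' hacyc k
      have hMkl : M k l = 0 := by
        by_contra h
        rcases Mgeom_support E θm hθ' k l h with h1 | h1
        · exact h_kl h1
        · exact hacyc k (Relation.TransGen.head hchl.1 h1)
      rw [hMkk, hMkl]
      ring
    · have hMml : M m k = θ l k * M m l :=
        Mgeom_through_l E θm hθ' hacyc j k l hchonly m hmA (fun h => hmk h.symm)
      rw [hMml, hσl, if_neg hmk]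
      ring
  have hprop : ∀ r ∈ A, c r = γ * w r := by
    have hmemA' : ∀ r : Fin p, r ∈ A → (Relation.TransGen E r j ∨ r = j) := by
      intro r hr
      rw [hA, Finset.mem_filter] at hr
      exact hr.2
    have hmemA : ∀ m : {x // x ∈ A}, Relation.TransGen E m.1 j ∨ m.1 = j :=
      fun m => hmemA' m.1 m.2
    set MA : Matrix {x // x ∈ A} {x // x ∈ A} ℝ := fun m r => M m.1 r.1 with hMAdef
    set NA : Matrix {x // x ∈ A} {x // x ∈ A} ℝ := fun m r => (1 - θm) m.1 r.1 with hNAdef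
    have hMN : MA * NA = 1 := by
      ext m s
      rw [Matrix.mul_apply]
      have hfull : ∑ r : Fin p, M m.1 r * (1 - θm) r s.1 = if m.1 = s.1 then 1 else 0 := by
        rw [← Matrix.mul_apply, hM, Mgeom_mul E θm hθ' hacyc, Matrix.one_apply]
      have hsub : ∑ r : {x // x ∈ A}, M m.1 r.1 * (1 - θm) r.1 s.1
          = ∑ r ∈ A, M m.1 r * (1 - θm) r s.1 :=
        Finset.sum_coe_sort A (fun r => M m.1 r * (1 - θm) r s.1)
      have hext : ∑ r ∈ A, M m.1 r * (1 - θm) r s.1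
          = ∑ r : Fin p, M m.1 r * (1 - θm) r s.1 := by
        apply Finset.sum_subset (Finset.subset_univ A)
        intro r _ hr
        rw [hMA0 m.1 (hmemA m) r hr, zero_mul]
      calc ∑ r : {x // x ∈ A}, MA m r * NA r s
          = ∑ r : {x // x ∈ A}, M m.1 r.1 * (1 - θm) r.1 s.1 := rfl
        _ = if m.1 = s.1 then 1 else 0 := by rw [hsub, hext, hfull]
        _ = (1 : Matrix {x // x ∈ A} {x // x ∈ A} ℝ) m s := by
            rw [Matrix.one_apply]
            by_cases h : m = s
            · rw [if_pos h, if_pos (by rw [h])]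
            · rw [if_neg h, if_neg (fun h' => h (Subtype.ext h'))]
    have hNM : NA * MA = 1 := mul_eq_one_comm.mp hMN
    set d : {x // x ∈ A} → ℝ := fun r => (c r.1 - γ * w r.1) * σ2 r.1 with hd
    have hMAd : MA.mulVec d = 0 := by
      funext m
      have hfull : ∑ r : Fin p, M m.1 r * ((c r - γ * w r) * σ2 r) = 0 := by
        have e : ∀ r, M m.1 r * ((c r - γ * w r) * σ2 r)
            = c r * σ2 r * M m.1 r - γ * (w r * σ2 r * M m.1 r) := fun r => by ring
        rw [Finset.sum_congr rfl fun r _ => e r, Finset.sum_sub_distrib, ← Finset.mul_sum,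
          heq1 m.1, heq2 m.1 m.2]
        rcases eq_or_ne k m.1 with heqkm | hne
        · rw [if_pos heqkm, if_pos heqkm, hγ]
          field_simp
          norm_num
        · rw [if_neg hne, if_neg hne]
          ring
      have hsub : ∑ r : {x // x ∈ A}, M m.1 r.1 * ((c r.1 - γ * w r.1) * σ2 r.1)
          = ∑ r ∈ A, M m.1 r * ((c r - γ * w r) * σ2 r) :=
        Finset.sum_coe_sort A (fun r => M m.1 r * ((c r - γ * w r) * σ2 r))
      have hext : ∑ r ∈ A, M m.1 r * ((c r - γ * w r) * σ2 r)
          = ∑ r : Fin p, M m.1 r * ((c r - γ * w r) * σ2 r) := by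
        apply Finset.sum_subset (Finset.subset_univ A)
        intro r _ hr
        rw [hMA0 m.1 (hmemA m) r hr, zero_mul]
      calc MA.mulVec d m = ∑ r : {x // x ∈ A}, M m.1 r.1 * ((c r.1 - γ * w r.1) * σ2 r.1) := rfl
        _ = 0 := by rw [hsub, hext, hfull]
    have hd0 : d = 0 := by
      have h1 : (NA * MA).mulVec d = d := by rw [hNM, Matrix.one_mulVec]
      rw [← Matrix.mulVec_mulVec, hMAd, Matrix.mulVec_zero] at h1
      exact h1.symm
    intro r hr
    have h2 := congrFun hd0 ⟨r, hr⟩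
    simp only [hd, Pi.zero_apply] at h2
    have hσr : σ2 r ≠ 0 := ne_of_gt (hvarpos r : (0:ℝ) < σ2 r)
    rcases mul_eq_zero.mp h2 with h3 | h3
    · linarith [sub_eq_zero.mp h3]
    · exact absurd h3 hσr
  -- integrals of noise times f(X j)
  set I : Fin p → ℝ := fun r => ∫ a, Ψ r a * f (X j a) ∂μ with hI
  have hI0 : ∀ r, r ∉ A → I r = 0 := by
    intro r hr
    set F : ({x // x ∈ A} → ℝ) → ℝ := fun t => f (∑ s : {x // x ∈ A}, M j s.1 * t s) with hF
    have hFmeas : Measurable F := by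
      apply hf.comp
      exact Finset.measurable_sum _ (fun s _ => (measurable_pi_apply s).const_mul _)
    have hXjrep : (fun a => f (X j a)) =ᵐ[μ] fun a => F (fun s : {x // x ∈ A} => Ψ s.1 a) := by
      filter_upwards [hXrep] with a ha
      have e1 : X j a = ∑ s ∈ A, M j s * Ψ s a := by
        rw [ha j]
        symm
        apply Finset.sum_subset (Finset.subset_univ A)
        intro s _ hs
        rw [hMA0 j (Or.inr rfl) s hs, zero_mul]
      have e2 : ∑ s ∈ A, M j s * Ψ s a = ∑ s : {x // x ∈ A}, M j s.1 * Ψ s.1 a :=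
        (Finset.sum_coe_sort A (fun s => M j s * Ψ s a)).symm
      rw [hF]
      simp only []
      rw [← e2, ← e1]
    have hdisj : Disjoint ({r} : Finset (Fin p)) A := by
      simp [Finset.disjoint_left, hr]
    have hind0 := hindep.indepFun_finset {r} A hdisj hΨmeas
    have hind : IndepFun (Ψ r) (fun a => F (fun s : {x // x ∈ A} => Ψ s.1 a)) μ := by
      have := hind0.comp
        (φ := fun t : ({x // x ∈ ({r} : Finset (Fin p))} → ℝ) =>
          t ⟨r, Finset.mem_singleton_self r⟩)
        (ψ := F) (measurable_pi_apply (X := fun _ => ℝ) _) hFmeas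
      exact this
    have hz : ∫ a, Ψ r a * F (fun s : {x // x ∈ A} => Ψ s.1 a) ∂μ = 0 := by
      rw [hind.integral_fun_mul_eq_mul_integral (hΨmeas r).aestronglyMeasurable
        (hFmeas.comp (measurable_pi_lambda _ (fun s => hΨmeas s.1))).aestronglyMeasurable,
        hcent r, zero_mul]
    rw [hI]
    simp only []
    rw [← hz]
    apply integral_congr_ae
    filter_upwards [hXjrep] with a ha
    rw [ha]
  have hswap : I l = θ l k * I k := by
    set U : Ω → ℝ := fun a => θ l k * Ψ k a with hU
    set V : Ω → ℝ := Ψ l with hV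
    set T : Finset (Fin p) := Finset.univ \ {k, l} with hT
    set Wm : Ω → Fin p → ℝ := fun a r => if h : r ∈ T then Ψ r a else 0 with hWm
    set G : (ℝ × ℝ) × (Fin p → ℝ) → ℝ :=
      fun q => M j l * (q.1.1 + q.1.2) + ∑ r, (if r ∈ T then M j r * q.2 r else 0) with hG
    have hGmeas : Measurable G := by
      apply Measurable.add
      · exact measurable_const.mul
          ((measurable_fst.comp measurable_fst).add (measurable_snd.comp measurable_fst))
      · apply Finset.measurable_sum
        intro r _
        by_cases h : r ∈ T
        · simp only [if_pos h]
          exact ((measurable_pi_apply r).comp measurable_snd).const_mul _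
        · simp only [if_neg h]
          exact measurable_const
    have hMjk : M j k = θ l k * M j l :=
      Mgeom_through_l E θm hθ' hacyc j k l hchonly j (Or.inr rfl) h_jk
    have hXjG : ∀ᵐ a ∂μ, X j a = G ((U a, V a), Wm a) := by
      filter_upwards [hXrep] with a ha
      rw [ha j, hG]
      simp only []
      have hterm : ∀ r : Fin p, M j r * Ψ r a =
          (if r = k then θ l k * M j l * Ψ k a else 0) +
          ((if r = l then M j l * Ψ l a else 0) +
          (if r ∈ T then M j r * Wm a r else 0)) := by
        intro r
        by_cases h1 : r = k
        · have hrT : r ∉ T := by simp [hT, h1]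
          rw [if_pos h1, if_neg (h1 ▸ (fun h => h_kl (h1 ▸ h))), if_neg hrT, h1, hMjk]
          ring
        · by_cases h2 : r = l
          · have hrT : r ∉ T := by simp [hT, h2]
            rw [if_neg h1, if_pos h2, if_neg hrT, h2]
            ring
          · have hrT : r ∈ T := by simp [hT, h1, h2]
            rw [if_neg h1, if_neg h2, if_pos hrT, hWm]
            simp only [dif_pos hrT]
            ring
      rw [Finset.sum_congr rfl fun r _ => hterm r, Finset.sum_add_distrib,
        Finset.sum_add_distrib]
      simp only [Finset.sum_ite_eq', Finset.mem_univ, if_true]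
      simp only [hU, hV]
      ring
    have hdisjT : Disjoint ({k, l} : Finset (Fin p)) T := Finset.disjoint_sdiff
    have hindKL := hindep.indepFun_finset {k, l} T hdisjT hΨmeas
    have hkmem : k ∈ ({k, l} : Finset (Fin p)) := by simp
    have hlmem : l ∈ ({k, l} : Finset (Fin p)) := by simp
    set φS : ({x // x ∈ ({k, l} : Finset (Fin p))} → ℝ) → ℝ × ℝ :=
      fun t => (θ l k * t ⟨k, hkmem⟩, t ⟨l, hlmem⟩) with hφS
    set φT : ({x // x ∈ T} → ℝ) → (Fin p → ℝ) :=
      fun t r => if h : r ∈ T then t ⟨r, h⟩ else 0 with hφT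
    have hφSmeas : Measurable φS :=
      ((measurable_pi_apply _).const_mul _).prodMk (measurable_pi_apply _)
    have hφTmeas : Measurable φT := by
      apply measurable_pi_lambda
      intro r
      by_cases h : r ∈ T
      · simp only [hφT, dif_pos h]
        exact measurable_pi_apply _
      · simp only [hφT, dif_neg h]
        exact measurable_const
    have hindΦW : IndepFun (fun a => (U a, V a)) Wm μ := hindKL.comp hφSmeas hφTmeas
    have hindΦ'W : IndepFun (fun a => (V a, U a)) Wm μ :=
      hindΦW.comp measurable_swap measurable_id
    have hUV : IndepFun U V μ := by
      have h0 : IndepFun (Ψ k) (Ψ l) μ := hindep.indepFun h_kl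
      exact h0.comp (measurable_id.const_mul (θ l k)) measurable_id
    have hVU : IndepFun V U μ := hUV.symm
    have hUmeas : Measurable U := (hΨmeas k).const_mul _
    have hVmeas : Measurable V := hΨmeas l
    have hWmeas : Measurable Wm := by
      apply measurable_pi_lambda
      intro r
      by_cases h : r ∈ T
      · simp only [hWm, dif_pos h]
        exact hΨmeas r
      · simp only [hWm, dif_neg h]
        exact measurable_const
    have hlawUV : μ.map (fun a => (U a, V a)) = (μ.map V).prod (μ.map V) := by
      rw [(indepFun_iff_map_prod_eq_prod_map_map hUmeas.aemeasurable
        hVmeas.aemeasurable).mp hUV, hdist]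
    have hlawVU : μ.map (fun a => (V a, U a)) = (μ.map V).prod (μ.map V) := by
      rw [(indepFun_iff_map_prod_eq_prod_map_map hVmeas.aemeasurable
        hUmeas.aemeasurable).mp hVU, hdist]
    have hjoint : μ.map (fun a => ((U a, V a), Wm a))
        = μ.map (fun a => ((V a, U a), Wm a)) := by
      rw [(indepFun_iff_map_prod_eq_prod_map_map (hUmeas.prodMk hVmeas).aemeasurable
          hWmeas.aemeasurable).mp hindΦW,
        (indepFun_iff_map_prod_eq_prod_map_map (hVmeas.prodMk hUmeas).aemeasurable
          hWmeas.aemeasurable).mp hindΦ'W,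
        hlawUV, hlawVU]
    set H : (ℝ × ℝ) × (Fin p → ℝ) → ℝ := fun q => q.1.2 * f (G q) with hH
    have hHmeas : Measurable H := (measurable_snd.comp measurable_fst).mul (hf.comp hGmeas)
    have hGsymm : ∀ u v wv, G ((v, u), wv) = G ((u, v), wv) := by
      intro u v wv
      rw [hG]
      simp only []
      ring
    calc I l = ∫ a, H ((U a, V a), Wm a) ∂μ := by
          rw [hI]
          simp only []
          apply integral_congr_ae
          filter_upwards [hXjG] with a ha
          rw [hH]
          simp only []
          rw [← ha]
      _ = ∫ q, H q ∂(μ.map (fun a => ((U a, V a), Wm a))) :=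
          (integral_map ((hUmeas.prodMk hVmeas).prodMk hWmeas).aemeasurable
            hHmeas.aestronglyMeasurable).symm
      _ = ∫ q, H q ∂(μ.map (fun a => ((V a, U a), Wm a))) := by rw [hjoint]
      _ = ∫ a, H ((V a, U a), Wm a) ∂μ :=
          integral_map ((hVmeas.prodMk hUmeas).prodMk hWmeas).aemeasurable
            hHmeas.aestronglyMeasurable
      _ = ∫ a, U a * f (X j a) ∂μ := by
          apply integral_congr_ae
          filter_upwards [hXjG] with a ha
          rw [hH]
          simp only []
          rw [hGsymm (U a) (V a) (Wm a), ← ha]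
      _ = θ l k * I k := by
          rw [hI]
          simp only []
          rw [← integral_const_mul]
          apply integral_congr_ae
          filter_upwards with a
          rw [hU]
          simp only []
          ring
  -- final assembly
  have hintf : ∀ r, Integrable (fun a => Ψ r a * f (X j a)) μ :=
    fun r => L2_mul_integrable (hL2 r) hfL2
  have hwI : ∑ r, w r * I r = 0 := by
    have hterm : ∀ r, w r * I r =
        (if r = k then -θ l k * I k else 0) + (if r = l then I l else 0) := by
      intro r
      rcases eq_or_ne r k with heq | hrk
      · simp [hw, heq, h_kl]
      · rcases eq_or_ne r l with heq | hrl
        · simp [hw, heq, hrk, Ne.symm h_kl]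
        · simp [hw, hrk, hrl]
    rw [Finset.sum_congr rfl fun r _ => hterm r, Finset.sum_add_distrib]
    simp only [Finset.sum_ite_eq', Finset.mem_univ, if_true]
    rw [hswap]
    ring
  have hcI : ∑ r, c r * I r = 0 := by
    have hterm : ∀ r, c r * I r = γ * (w r * I r) := by
      intro r
      by_cases hr : r ∈ A
      · rw [hprop r hr]; ring
      · rw [hI0 r hr]; ring
    rw [Finset.sum_congr rfl fun r _ => hterm r, ← Finset.mul_sum, hwI, mul_zero]
  have hstep2 : ∑ i, Sx⁻¹ k i * ∫ a, X i a * f (X j a) ∂μ = ∑ r, c r * I r := by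
    have e1 : ∑ i, Sx⁻¹ k i * ∫ a, X i a * f (X j a) ∂μ
        = ∫ a, ∑ i, Sx⁻¹ k i * (X i a * f (X j a)) ∂μ := by
      rw [integral_finset_sum _ (fun i _ => (hprod i).const_mul _)]
      exact Finset.sum_congr rfl fun i _ => (integral_const_mul _ _).symm
    have e2 : ∑ r, c r * I r = ∫ a, ∑ r, c r * (Ψ r a * f (X j a)) ∂μ := by
      rw [integral_finset_sum _ (fun r _ => (hintf r).const_mul _)]
      refine Finset.sum_congr rfl fun r _ => ?_
      rw [hI]
      simp only []
      rw [integral_const_mul]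
    rw [e1, e2]
    apply integral_congr_ae
    filter_upwards [hXrep] with a ha
    calc ∑ i, Sx⁻¹ k i * (X i a * f (X j a))
        = (∑ i, Sx⁻¹ k i * X i a) * f (X j a) := by
          rw [Finset.sum_mul]
          exact Finset.sum_congr rfl fun i _ => by ring
      _ = (∑ r, c r * Ψ r a) * f (X j a) := by
          congr 1
          calc ∑ i, Sx⁻¹ k i * X i a
              = ∑ i, Sx⁻¹ k i * ∑ r, M i r * Ψ r a :=
                Finset.sum_congr rfl fun i _ => by rw [ha i]
            _ = ∑ r, c r * Ψ r a := by
                simp only [hc, Finset.mul_sum, Finset.sum_mul]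
                rw [Finset.sum_comm]
                exact Finset.sum_congr rfl fun r _ =>
                  Finset.sum_congr rfl fun i _ => by ring
      _ = ∑ r, c r * (Ψ r a * f (X j a)) := by
          rw [Finset.sum_mul]
          exact Finset.sum_congr rfl fun r _ => by ring
  calc Sx⁻¹.mulVec (fun i => ∫ a, X i a * f (X j a) ∂μ) k
      = ∑ i, Sx⁻¹ k i * ∫ a, X i a * f (X j a) ∂μ := rfl
    _ = ∑ r, c r * I r := hstep2
    _ = 0 := hcI
end
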